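/- Let a, b be coprime positive integers, c := a+b, and r ≥ 1 an integer. Let g = Σ_{t=0}^r c_t·T^t ∈ ℂ[T] be a squarefree polynomial of degree r with g(0) ≠ 0, and define h := Σ_{t=0}^r c_t·x^{a·t}·y^{b·t}·z^{c·(r−t)} ∈ ℂ[x,y,z]. Then h is squarefree and h is a product of a nonzero constant and exactly r pairwise non-associated irreducible polynomials of ℂ[x,y,z] (namely x^a·y^b − μ·z^c for μ running over the r distinct roots of g); in particular the number of irreducible factors of h, counted in its factorization into irreducibles, is exactly r. -/

import Mathlib

open MvPolynomial

set_option maxHeartbeats 1000000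
set_option synthInstance.maxHeartbeats 400000

private lemma aux_prime_X {n : ℕ} (i : Fin (n + 1)) :
    Prime (X i : MvPolynomial (Fin (n + 1)) ℂ) := by
  have h0 : Prime (X 0 : MvPolynomial (Fin (n + 1)) ℂ) := by
    refine (MulEquiv.prime_iff
      (MvPolynomial.finSuccEquiv ℂ n).toRingEquiv.toMulEquiv).mp ?_
    have he : (MvPolynomial.finSuccEquiv ℂ n).toRingEquiv.toMulEquiv
        (X 0 : MvPolynomial (Fin (n + 1)) ℂ) = Polynomial.X :=
      MvPolynomial.finSuccEquiv_X_zero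
    rw [he]
    exact Polynomial.prime_X
  have h1 := (MulEquiv.prime_iff
      (renameEquiv ℂ (Equiv.swap (0 : Fin (n + 1)) i)).toRingEquiv.toMulEquiv).mpr h0
  have he : (renameEquiv ℂ (Equiv.swap (0 : Fin (n + 1)) i)).toRingEquiv.toMulEquiv
      (X 0 : MvPolynomial (Fin (n + 1)) ℂ) = X i := by
    simp [MvPolynomial.renameEquiv_apply, MvPolynomial.rename_X]
  rwa [he] at h1

private lemma aux_X_not_dvd {n : ℕ} {i j : Fin n} (hij : i ≠ j) :
    ¬ ((X i : MvPolynomial (Fin n) ℂ) ∣ X j) := by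
  rintro ⟨w, hw⟩
  have h := congrArg (eval (fun k => if k = i then (0 : ℂ) else 1)) hw
  simp [Ne.symm hij] at h

private lemma aux_irred_of_map {R : Type*} [CommRing R] [IsDomain R]
    {K : Type*} [Field K] [Algebra R K] [IsFractionRing R K]
    {f : Polynomial R} (hprim : ∀ r : R, Polynomial.C r ∣ f → IsUnit r)
    (H : Irreducible (f.map (algebraMap R K))) : Irreducible f := by
  have hinj := IsFractionRing.injective R K
  have key : ∀ p q : Polynomial R, f = p * q → IsUnit (p.map (algebraMap R K)) → IsUnit p := by
    intro p q hfpq hu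
    obtain ⟨r, hr, hCr⟩ := Polynomial.isUnit_iff.mp hu
    have hdeg : p.natDegree = 0 := by
      have h1 := Polynomial.natDegree_map_eq_of_injective hinj p
      rw [← hCr, Polynomial.natDegree_C] at h1
      exact h1.symm
    have hp : p = Polynomial.C (p.coeff 0) := Polynomial.eq_C_of_natDegree_eq_zero hdeg
    rw [hp]
    refine Polynomial.isUnit_C.mpr (hprim _ ?_)
    rw [← hp]
    exact ⟨q, hfpq⟩
  constructor
  · intro hu
    exact H.not_isUnit (hu.map (Polynomial.mapRingHom (algebraMap R K)))
  · intro p q hfpq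
    rcases H.isUnit_or_isUnit (by rw [hfpq, Polynomial.map_mul]) with hu | hu
    · exact Or.inl (key p q hfpq hu)
    · exact Or.inr (key q p (by rw [hfpq, mul_comm]) hu)
open MvPolynomial

set_option maxHeartbeats 1000000
set_option synthInstance.maxHeartbeats 400000

private lemma aux_no_root (p b c : ℕ) (hp : p.Prime) (hpb : ¬ p ∣ b) {μ : ℂ} (hμ : μ ≠ 0)
    (u : FractionRing (MvPolynomial (Fin 2) ℂ)) :
    u ^ p ≠ algebraMap (MvPolynomial (Fin 2) ℂ) (FractionRing (MvPolynomial (Fin 2) ℂ))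
        (C μ * X 1 ^ c)
      / algebraMap (MvPolynomial (Fin 2) ℂ) (FractionRing (MvPolynomial (Fin 2) ℂ))
        ((X 0) ^ b) := by
  intro hu
  set R2 := MvPolynomial (Fin 2) ℂ with hR2
  set φ := algebraMap (MvPolynomial (Fin 2) ℂ) (FractionRing (MvPolynomial (Fin 2) ℂ)) with hφdef
  have hinj : Function.Injective φ := IsFractionRing.injective _ _
  have hX0 : (X 0 : R2) ≠ 0 := MvPolynomial.X_ne_zero 0
  have hφX0 : φ (X 0) ≠ 0 := fun hz => hX0 (hinj (by rw [hz, map_zero]))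
  have hppos : 0 < p := hp.pos
  have hmod : b % p ≠ 0 := fun hm => hpb (Nat.dvd_of_mod_eq_zero hm)
  set d := p - b % p with hd
  have hmlt : b % p < p := Nat.mod_lt _ hppos
  have hd0 : 0 < d := by omega
  have hdp : d < p := by omega
  set e := b / p + 1 with he
  have hpe : p * e = b + d := by
    have h1 : p * (b / p) + b % p = b := Nat.div_add_mod b p
    rw [he, Nat.mul_add, mul_one, hd]
    generalize p * (b / p) = x at h1 ⊢
    omega
  have hVb : φ ((X 0 : R2) ^ b) ≠ 0 := fun hz => (pow_ne_zero b hX0) (hinj (by rw [hz, map_zero]))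
  have hu' : (u * φ (X 0) ^ e) ^ p = φ (C μ * X 1 ^ c * X 0 ^ d) := by
    rw [mul_pow, hu, ← pow_mul, mul_comm e p, hpe, pow_add]
    simp only [map_mul, map_pow]
    rw [map_pow] at hVb
    field_simp
  have hint : IsIntegral (MvPolynomial (Fin 2) ℂ) (u * φ (X 0) ^ e) := by
    refine ⟨Polynomial.X ^ p - Polynomial.C (C μ * X 1 ^ c * X 0 ^ d),
      Polynomial.monic_X_pow_sub_C _ hp.ne_zero, ?_⟩
    rw [Polynomial.eval₂_sub, Polynomial.eval₂_pow, Polynomial.eval₂_X, Polynomial.eval₂_C,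
      hu', sub_self]
  obtain ⟨s, hs⟩ := IsIntegrallyClosed.isIntegral_iff.mp hint
  have hs2 : s ^ p = C μ * X 1 ^ c * X 0 ^ d := by
    apply hinj
    rw [map_pow, hs, hu']
  have h3 := congrArg
    (MvPolynomial.aeval (![Polynomial.X, 1] : Fin 2 → Polynomial ℂ)) hs2
  rw [map_pow, map_mul, map_mul, aeval_C, map_pow, map_pow, aeval_X, aeval_X] at h3
  simp only [Matrix.cons_val_zero, Matrix.cons_val_one, Matrix.head_cons, one_pow, mul_one] at h3
  rw [Polynomial.algebraMap_apply, Algebra.algebraMap_self_apply] at h3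
  have h4 := congrArg Polynomial.natDegree h3
  rw [Polynomial.natDegree_pow, Polynomial.natDegree_C_mul hμ, Polynomial.natDegree_X_pow] at h4
  have hpd : p ∣ d := ⟨_, h4.symm⟩
  exact absurd (Nat.le_of_dvd hd0 hpd) (not_le.mpr hdp)

private lemma aux_irred (a b c : ℕ) (hao : Odd a) (hb : 0 < b)
    (hab : ∀ p : ℕ, p.Prime → p ∣ a → ¬ p ∣ b) {μ : ℂ} (hμ : μ ≠ 0) :
    Irreducible ((X 0 : MvPolynomial (Fin 3) ℂ) ^ a * X 1 ^ b - C μ * X 2 ^ c) := by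
  have ha : a ≠ 0 := by
    rintro rfl
    simp [Nat.odd_iff] at hao
  rw [← MulEquiv.irreducible_iff (MvPolynomial.finSuccEquiv ℂ 2)]
  have hmap : (MvPolynomial.finSuccEquiv ℂ 2)
        ((X 0 : MvPolynomial (Fin 3) ℂ) ^ a * X 1 ^ b - C μ * X 2 ^ c)
      = Polynomial.C ((X 0 : MvPolynomial (Fin 2) ℂ) ^ b) * Polynomial.X ^ a
        - Polynomial.C (C μ * (X 1 : MvPolynomial (Fin 2) ℂ) ^ c) := by
    have e1 : (1 : Fin 3) = (0 : Fin 2).succ := rfl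
    have e2 : (2 : Fin 3) = (1 : Fin 2).succ := rfl
    rw [map_sub, map_mul, map_mul, map_pow, map_pow, map_pow, e1, e2,
      MvPolynomial.finSuccEquiv_X_zero, MvPolynomial.finSuccEquiv_X_succ,
      MvPolynomial.finSuccEquiv_X_succ,
      show (MvPolynomial.finSuccEquiv ℂ 2) (C μ) = Polynomial.C (C μ) by
        simp [MvPolynomial.finSuccEquiv_apply],
      ← Polynomial.C_pow, ← Polynomial.C_pow, ← Polynomial.C_mul]
    ring
  rw [hmap]
  have hX0 : (X 0 : MvPolynomial (Fin 2) ℂ) ≠ 0 := MvPolynomial.X_ne_zero 0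
  apply aux_irred_of_map (K := FractionRing (MvPolynomial (Fin 2) ℂ))
  · -- primitivity
    intro ρ hρ
    have hco := (Polynomial.C_dvd_iff_dvd_coeff ρ _).mp hρ
    have h1 : ρ ∣ (X 0 : MvPolynomial (Fin 2) ℂ) ^ b := by
      have h := hco a
      rw [Polynomial.coeff_sub, Polynomial.coeff_C_mul, Polynomial.coeff_X_pow, if_pos rfl,
        mul_one, Polynomial.coeff_C, if_neg ha, sub_zero] at h
      exact h
    have h2 : ρ ∣ C μ * (X 1 : MvPolynomial (Fin 2) ℂ) ^ c := by
      have h := hco 0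
      rw [Polynomial.coeff_sub, Polynomial.coeff_C_mul, Polynomial.coeff_X_pow,
        if_neg (Ne.symm ha), Polynomial.coeff_C, if_pos rfl, mul_zero, zero_sub] at h
      exact (dvd_neg).mp h
    by_contra hρu
    have hρ0 : ρ ≠ 0 := by
      rintro rfl
      exact (pow_ne_zero b hX0) (zero_dvd_iff.mp h1)
    obtain ⟨q, hqirr, hqd⟩ := WfDvdMonoid.exists_irreducible_factor hρu hρ0
    have hq : Prime q := UniqueFactorizationMonoid.irreducible_iff_prime.mp hqirr
    have hq1 : q ∣ (X 0 : MvPolynomial (Fin 2) ℂ) := hq.dvd_of_dvd_pow (hqd.trans h1)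
    have hq2 : q ∣ (X 1 : MvPolynomial (Fin 2) ℂ) ^ c := by
      rcases hq.2.2 _ _ (hqd.trans h2) with hcase | hcase
      · exact absurd (isUnit_of_dvd_unit hcase
          (IsUnit.map (C : ℂ →+* MvPolynomial (Fin 2) ℂ) hμ.isUnit)) hq.not_unit
      · exact hcase
    have hq3 : q ∣ (X 1 : MvPolynomial (Fin 2) ℂ) := hq.dvd_of_dvd_pow hq2
    have hq1' : Associated q (X 0 : MvPolynomial (Fin 2) ℂ) :=
      hq.associated_of_dvd (aux_prime_X 0) hq1
    exact aux_X_not_dvd (show (0 : Fin 2) ≠ 1 by decide) (hq1'.symm.dvd.trans hq3)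
  · -- irreducibility over the fraction field
    set φ := algebraMap (MvPolynomial (Fin 2) ℂ) (FractionRing (MvPolynomial (Fin 2) ℂ))
      with hφdef
    have hinj : Function.Injective φ := IsFractionRing.injective _ _
    have hXb : φ ((X 0 : MvPolynomial (Fin 2) ℂ) ^ b) ≠ 0 :=
      fun hz => (pow_ne_zero b hX0) (hinj (by rw [hz, map_zero]))
    have hmap2 : (Polynomial.C ((X 0 : MvPolynomial (Fin 2) ℂ) ^ b) * Polynomial.X ^ a
          - Polynomial.C (C μ * (X 1 : MvPolynomial (Fin 2) ℂ) ^ c)).map φ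
        = Polynomial.C (φ ((X 0 : MvPolynomial (Fin 2) ℂ) ^ b))
          * (Polynomial.X ^ a
            - Polynomial.C (φ (C μ * (X 1 : MvPolynomial (Fin 2) ℂ) ^ c)
                / φ ((X 0 : MvPolynomial (Fin 2) ℂ) ^ b))) := by
      rw [Polynomial.map_sub, Polynomial.map_mul, Polynomial.map_pow, Polynomial.map_C,
        Polynomial.map_C, Polynomial.map_X]
      conv_lhs => rw [show φ (C μ * X 1 ^ c)
          = φ (C μ * X 1 ^ c) / φ ((X 0 : MvPolynomial (Fin 2) ℂ) ^ b)
            * φ ((X 0 : MvPolynomial (Fin 2) ℂ) ^ b) from (div_mul_cancel₀ _ hXb).symm]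
      rw [Polynomial.C_mul]
      ring
    rw [hmap2]
    have hun : IsUnit (Polynomial.C (φ ((X 0 : MvPolynomial (Fin 2) ℂ) ^ b))) :=
      Polynomial.isUnit_C.mpr hXb.isUnit
    rw [← hun.unit_spec, irreducible_units_mul]
    exact X_pow_sub_C_irreducible_of_odd hao
      (fun q hq hqa z => aux_no_root q b c hq (hab q hq hqa) hμ z)

private lemma aux_sf (s : Finset ℂ) (f : ℂ → MvPolynomial (Fin 3) ℂ)
    (hirr : ∀ μ ∈ s, Irreducible (f μ))
    (hna : ∀ μ ∈ s, ∀ ν ∈ s, μ ≠ ν → ¬ Associated (f μ) (f ν)) :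
    Squarefree (∏ μ ∈ s, f μ) := by
  induction s using Finset.cons_induction with
  | empty => simp only [Finset.prod_empty]; exact squarefree_one
  | cons ξ s hnotmem ih =>
    rw [Finset.prod_cons]
    have hξ : Irreducible (f ξ) := hirr _ (Finset.mem_cons_self _ _)
    refine squarefree_mul_iff.mpr ⟨?_, hξ.squarefree, ih
      (fun μ hμ => hirr _ (Finset.mem_cons.mpr (Or.inr hμ)))
      (fun μ hμ ν hν hne => hna _ (Finset.mem_cons.mpr (Or.inr hμ)) _
        (Finset.mem_cons.mpr (Or.inr hν)) hne)⟩
    refine IsRelPrime.prod_right fun ν hν => ?_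
    intro dd hd1 hd2
    by_contra hdu
    obtain ⟨w, hw⟩ := hd1
    have hassoc : Associated dd (f ξ) := by
      rcases hξ.isUnit_or_isUnit hw with hcase | hcase
      · exact absurd hcase hdu
      · exact ⟨hcase.unit, by rw [hcase.unit_spec]; exact hw.symm⟩
    have h2 : f ξ ∣ f ν := hassoc.symm.dvd.trans hd2
    have h3 := hξ.associated_of_dvd (hirr _ (Finset.mem_cons.mpr (Or.inr hν))) h2
    have hne : ξ ≠ ν := by
      rintro rfl
      exact hnotmem hν
    exact hna ξ (Finset.mem_cons_self _ _) ν (Finset.mem_cons.mpr (Or.inr hν)) hne h3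

theorem stmt6 (a b c r : ℕ) (ha : 0 < a) (hb : 0 < b) (hab : Nat.Coprime a b)
    (hc : c = a + b) (hr : 1 ≤ r)
    (g : Polynomial ℂ) (hg : g.degree = r) (hgsf : Squarefree g)
    (hg0 : g.eval 0 ≠ 0)
    (h : MvPolynomial (Fin 3) ℂ)
    (hh : h = ∑ t ∈ Finset.range (r + 1),
        C (g.coeff t) * X 0 ^ (a * t) * X 1 ^ (b * t) * X 2 ^ (c * (r - t))) :
    Squarefree h ∧
    g.roots.toFinset.card = r ∧
    h = C g.leadingCoeff
        * ∏ μ ∈ g.roots.toFinset,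
            ((X 0 : MvPolynomial (Fin 3) ℂ) ^ a * X 1 ^ b - C μ * X 2 ^ c) ∧
    (∀ μ ∈ g.roots.toFinset,
        Irreducible ((X 0 : MvPolynomial (Fin 3) ℂ) ^ a * X 1 ^ b - C μ * X 2 ^ c)) ∧
    (∀ μ ∈ g.roots.toFinset, ∀ ν ∈ g.roots.toFinset, μ ≠ ν →
        ¬ Associated ((X 0 : MvPolynomial (Fin 3) ℂ) ^ a * X 1 ^ b - C μ * X 2 ^ c)
            ((X 0 : MvPolynomial (Fin 3) ℂ) ^ a * X 1 ^ b - C ν * X 2 ^ c)) := by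
  have hg0' : g ≠ 0 := by
    rintro rfl
    rw [Polynomial.degree_zero] at hg
    simp at hg
  have hnd : g.natDegree = r := Polynomial.natDegree_eq_of_degree_eq_some hg
  have hsep : g.Separable := PerfectField.separable_iff_squarefree.mpr hgsf
  have hnodup : g.roots.Nodup := Polynomial.nodup_roots hsep
  have hcardM : Multiset.card g.roots = g.natDegree :=
    Polynomial.splits_iff_card_roots.mp (IsAlgClosed.splits g)
  have hcard : g.roots.toFinset.card = r :=
    (Multiset.toFinset_card_eq_card_iff_nodup.mpr hnodup).trans (hcardM.trans hnd)
  have hlc : g.leadingCoeff ≠ 0 := Polynomial.leadingCoeff_ne_zero.mpr hg0'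
  have hcpos : 0 < c := by omega
  have hroots0 : ∀ μ ∈ g.roots.toFinset, μ ≠ 0 := by
    intro μ hμ h0
    have hm := Multiset.mem_toFinset.mp hμ
    rw [Polynomial.mem_roots hg0'] at hm
    rw [h0] at hm
    exact hg0 hm
  have hdvd_ab : ∀ p : ℕ, p.Prime → p ∣ a → ¬ p ∣ b := by
    intro p hp hpa hpb
    have hd := Nat.dvd_gcd hpa hpb
    rw [Nat.Coprime.gcd_eq_one hab] at hd
    exact hp.ne_one (Nat.dvd_one.mp hd)
  have hdvd_ba : ∀ p : ℕ, p.Prime → p ∣ b → ¬ p ∣ a := by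
    intro p hp hpb hpa
    have hd := Nat.dvd_gcd hpa hpb
    rw [Nat.Coprime.gcd_eq_one hab] at hd
    exact hp.ne_one (Nat.dvd_one.mp hd)
  have hirr : ∀ μ ∈ g.roots.toFinset,
      Irreducible ((X 0 : MvPolynomial (Fin 3) ℂ) ^ a * X 1 ^ b - C μ * X 2 ^ c) := by
    intro μ hμ
    have hμ0 := hroots0 μ hμ
    rcases Nat.even_or_odd a with hae | hao
    · have hbodd : Odd b := by
        rcases Nat.even_or_odd b with hbe | hbo
        · exfalso
          have hd := Nat.dvd_gcd hae.two_dvd hbe.two_dvd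
          rw [Nat.Coprime.gcd_eq_one hab] at hd
          omega
        · exact hbo
      have h' := aux_irred b a c hbodd ha hdvd_ba hμ0
      have h'' := (MulEquiv.irreducible_iff (renameEquiv ℂ (Equiv.swap (0 : Fin 3) 1))).mpr h'
      have heq : (renameEquiv ℂ (Equiv.swap (0 : Fin 3) 1))
          ((X 0 : MvPolynomial (Fin 3) ℂ) ^ b * X 1 ^ a - C μ * X 2 ^ c)
          = (X 0 : MvPolynomial (Fin 3) ℂ) ^ a * X 1 ^ b - C μ * X 2 ^ c := by
        rw [MvPolynomial.renameEquiv_apply]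
        rw [map_sub, map_mul, map_mul, map_pow, map_pow, map_pow, MvPolynomial.rename_X,
          MvPolynomial.rename_X, MvPolynomial.rename_X, MvPolynomial.rename_C,
          Equiv.swap_apply_left, Equiv.swap_apply_right,
          Equiv.swap_apply_of_ne_of_ne (show (2 : Fin 3) ≠ 0 by decide)
            (show (2 : Fin 3) ≠ 1 by decide)]
        ring
      rwa [heq] at h''
    · exact aux_irred a b c hao hb hdvd_ab hμ0
  have hna : ∀ μ ∈ g.roots.toFinset, ∀ ν ∈ g.roots.toFinset, μ ≠ ν →
      ¬ Associated ((X 0 : MvPolynomial (Fin 3) ℂ) ^ a * X 1 ^ b - C μ * X 2 ^ c)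
        ((X 0 : MvPolynomial (Fin 3) ℂ) ^ a * X 1 ^ b - C ν * X 2 ^ c) := by
    intro μ hμm ν hνm hne hA
    have hdvd1 : ((X 0 : MvPolynomial (Fin 3) ℂ) ^ a * X 1 ^ b - C μ * X 2 ^ c)
        ∣ C (ν - μ) * X 2 ^ c := by
      have h1 := hA.dvd
      have h2 : ((X 0 : MvPolynomial (Fin 3) ℂ) ^ a * X 1 ^ b - C μ * X 2 ^ c)
            - (X 0 ^ a * X 1 ^ b - C ν * X 2 ^ c)
          = C (ν - μ) * (X 2 : MvPolynomial (Fin 3) ℂ) ^ c := by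
        rw [map_sub]; ring
      rw [← h2]
      exact dvd_sub dvd_rfl h1
    have hCu : IsUnit (C (ν - μ) : MvPolynomial (Fin 3) ℂ) :=
      IsUnit.map (C : ℂ →+* MvPolynomial (Fin 3) ℂ) (sub_ne_zero.mpr (Ne.symm hne)).isUnit
    obtain ⟨uu, huu⟩ := hCu
    have hdvd2 : ((X 0 : MvPolynomial (Fin 3) ℂ) ^ a * X 1 ^ b - C μ * X 2 ^ c)
        ∣ (X 2 : MvPolynomial (Fin 3) ℂ) ^ c := by
      have h3 : (X 2 : MvPolynomial (Fin 3) ℂ) ^ c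
          = (↑uu⁻¹ : MvPolynomial (Fin 3) ℂ) * (C (ν - μ) * (X 2 : MvPolynomial (Fin 3) ℂ) ^ c) := by
        rw [← huu, ← mul_assoc, Units.inv_mul, one_mul]
      have h4 := Dvd.dvd.mul_left hdvd1 ((↑uu⁻¹ : MvPolynomial (Fin 3) ℂ))
      rwa [← h3] at h4
    have hpμ : Prime ((X 0 : MvPolynomial (Fin 3) ℂ) ^ a * X 1 ^ b - C μ * X 2 ^ c) :=
      UniqueFactorizationMonoid.irreducible_iff_prime.mp (hirr μ hμm)
    have hdX2 := hpμ.dvd_of_dvd_pow hdvd2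
    have hass := hpμ.associated_of_dvd (aux_prime_X 2) hdX2
    have hX2d : (X 2 : MvPolynomial (Fin 3) ℂ) ∣ X 0 ^ a * X 1 ^ b := by
      have h5 := hass.symm.dvd
      have h6 : (X 2 : MvPolynomial (Fin 3) ℂ) ∣ C μ * X 2 ^ c :=
        Dvd.dvd.mul_left (dvd_pow_self _ hcpos.ne') _
      have h7 := dvd_add h5 h6
      rwa [sub_add_cancel] at h7
    rcases (aux_prime_X (2 : Fin 3)).2.2 _ _ hX2d with hcase | hcase
    · exact aux_X_not_dvd (show (2 : Fin 3) ≠ 0 by decide)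
        ((aux_prime_X (2 : Fin 3)).dvd_of_dvd_pow hcase)
    · exact aux_X_not_dvd (show (2 : Fin 3) ≠ 1 by decide)
        ((aux_prime_X (2 : Fin 3)).dvd_of_dvd_pow hcase)
  have hinj : Function.Injective
      (algebraMap (MvPolynomial (Fin 3) ℂ) (FractionRing (MvPolynomial (Fin 3) ℂ))) :=
    IsFractionRing.injective _ _
  have hprod : h = C g.leadingCoeff
      * ∏ μ ∈ g.roots.toFinset,
          ((X 0 : MvPolynomial (Fin 3) ℂ) ^ a * X 1 ^ b - C μ * X 2 ^ c) := by
    set φ := algebraMap (MvPolynomial (Fin 3) ℂ) (FractionRing (MvPolynomial (Fin 3) ℂ))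
      with hφdef
    apply hinj
    have hX2 : φ (X 2) ≠ 0 :=
      fun hz => (MvPolynomial.X_ne_zero (2 : Fin 3)) (hinj (by rw [hz, map_zero]))
    have hV : φ (X 2) ^ c ≠ 0 := pow_ne_zero _ hX2
    set w := (φ (X 0) ^ a * φ (X 1) ^ b) / φ (X 2) ^ c with hwdef
    have hL : φ h = (Polynomial.eval₂ (φ.comp (C : ℂ →+* MvPolynomial (Fin 3) ℂ)) w g)
        * φ (X 2) ^ (c * r) := by
      rw [hh, map_sum, Polynomial.eval₂_eq_sum_range, hnd, Finset.sum_mul]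
      refine Finset.sum_congr rfl fun t ht => ?_
      have htr : t ≤ r := Nat.lt_succ_iff.mp (Finset.mem_range.mp ht)
      have hrt : c * r = c * (r - t) + c * t := by
        rw [← Nat.mul_add, Nat.sub_add_cancel htr]
      simp only [map_mul, map_pow, RingHom.comp_apply]
      rw [hrt, pow_add, hwdef, div_pow]
      have hVt : (φ (X 2) ^ c) ^ t ≠ 0 := pow_ne_zero _ hV
      field_simp
      ring
    have hR : φ (C g.leadingCoeff * ∏ μ ∈ g.roots.toFinset,
          ((X 0 : MvPolynomial (Fin 3) ℂ) ^ a * X 1 ^ b - C μ * X 2 ^ c))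
        = (Polynomial.eval₂ (φ.comp (C : ℂ →+* MvPolynomial (Fin 3) ℂ)) w g)
          * φ (X 2) ^ (c * r) := by
      have hgfact := Polynomial.C_leadingCoeff_mul_prod_multiset_X_sub_C hcardM
      have hev : Polynomial.eval₂ (φ.comp (C : ℂ →+* MvPolynomial (Fin 3) ℂ)) w g
          = φ (C g.leadingCoeff) * ∏ μ ∈ g.roots.toFinset, (w - φ (C μ)) := by
        conv_lhs => rw [← hgfact]
        rw [← Polynomial.coe_eval₂RingHom, map_mul, map_multiset_prod, Multiset.map_map]
        congr 1
        · rw [Polynomial.coe_eval₂RingHom, Polynomial.eval₂_C, RingHom.comp_apply]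
        · rw [Finset.prod_eq_multiset_prod, Multiset.toFinset_val,
            Multiset.dedup_eq_self.mpr hnodup]
          refine congrArg Multiset.prod (Multiset.map_congr rfl fun μ _ => ?_)
          simp only [Function.comp_apply, Polynomial.coe_eval₂RingHom, Polynomial.eval₂_sub,
            Polynomial.eval₂_X, Polynomial.eval₂_C, RingHom.comp_apply]
      rw [map_mul, map_prod, hev, mul_assoc]
      congr 1
      have hterm : ∀ μ ∈ g.roots.toFinset,
          φ ((X 0 : MvPolynomial (Fin 3) ℂ) ^ a * X 1 ^ b - C μ * X 2 ^ c)
          = (w - φ (C μ)) * φ (X 2) ^ c := by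
        intro μ _
        simp only [map_sub, map_mul, map_pow]
        rw [sub_mul, hwdef, div_mul_cancel₀ _ hV]
      rw [Finset.prod_congr rfl hterm, Finset.prod_mul_distrib, Finset.prod_const, hcard,
        ← pow_mul]
    rw [hL, hR]
  have hCu : IsUnit (C g.leadingCoeff : MvPolynomial (Fin 3) ℂ) :=
    IsUnit.map (C : ℂ →+* MvPolynomial (Fin 3) ℂ) hlc.isUnit
  obtain ⟨U, hU⟩ := hCu
  have hsf : Squarefree h := by
    have hsf0 := aux_sf g.roots.toFinset
      (fun μ => (X 0 : MvPolynomial (Fin 3) ℂ) ^ a * X 1 ^ b - C μ * X 2 ^ c) hirr hna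
    refine Squarefree.squarefree_of_dvd ⟨↑U⁻¹, ?_⟩ hsf0
    rw [hprod, ← hU, mul_comm (↑U : MvPolynomial (Fin 3) ℂ), mul_assoc, Units.mul_inv, mul_one]
  exact ⟨hsf, hcard, hprod, hirr, hna⟩
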